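/- Stopping-time transfer along bicausal couplings: let π be a bicausal coupling between P, Q ∈ 𝒫_p(ℝ^T) and τ* a stopping time with respect to (ℱ_t^X). Then there exists a stopping time τ with respect to (ℱ_t^Y) such that E_Q[f(Y, τ(Y))] ≤ E_π[f(Y, τ*(X))], for any f : ℝ^T × {1,...,T} → ℝ with f(·,t) Borel and appropriately integrable and f(Y,t) ℱ_t^Y-measurable. Consequently s(Q) ≤ E_π[f(Y, τ*(X))] where s(Q) = inf_{τ∈ST} E_Q[f(X,τ)]. -/

import Mathlib

open MeasureTheory ProbabilityTheory Filter Set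

noncomputable section

abbrev PathSp (T : ℕ) := Fin T → ℝ

/-- σ-algebra generated by the first `t` coordinates `X_1,…,X_t` on path space. -/
def FX (T t : ℕ) : MeasurableSpace (PathSp T) :=
  ⨆ i : Fin T, ⨆ _ : (i : ℕ) < t, MeasurableSpace.comap (fun x => x i) inferInstance

def prodX (T t : ℕ) : MeasurableSpace (PathSp T × PathSp T) := (FX T t).comap Prod.fst

def prodY (T t : ℕ) : MeasurableSpace (PathSp T × PathSp T) := (FX T t).comap Prod.snd

def prodXY (T t : ℕ) : MeasurableSpace (PathSp T × PathSp T) := prodX T t ⊔ prodY T t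

def IsCoupling {T : ℕ} (π : Measure (PathSp T × PathSp T)) (P Q : Measure (PathSp T)) : Prop :=
  π.map Prod.fst = P ∧ π.map Prod.snd = Q

/-- Causality of a coupling: conditionally on `X_1,…,X_t`, the variables `Y_1,…,Y_t`
are independent of `X_1,…,X_T`. -/
def Causal (T : ℕ) (π : Measure (PathSp T × PathSp T)) : Prop :=
  ∀ t ≤ T, ∀ A : Set (PathSp T), MeasurableSet[FX T t] A →
    (π[fun z => A.indicator (fun _ => (1:ℝ)) z.2 | prodX T T]) =ᵐ[π]
    (π[fun z => A.indicator (fun _ => (1:ℝ)) z.2 | prodX T t])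

def Bicausal (T : ℕ) (π : Measure (PathSp T × PathSp T)) : Prop :=
  Causal T π ∧ ∀ t ≤ T, ∀ A : Set (PathSp T), MeasurableSet[FX T t] A →
    (π[fun z => A.indicator (fun _ => (1:ℝ)) z.1 | prodY T T]) =ᵐ[π]
    (π[fun z => A.indicator (fun _ => (1:ℝ)) z.1 | prodY T t])

/-- `P` has a finite `p`-th moment. -/
def FiniteMoment {T : ℕ} (p : ℝ) (P : Measure (PathSp T)) : Prop :=
  ∀ t : Fin T, MemLp (fun x => x t) (ENNReal.ofReal p) P

/-- The adapted Wasserstein distance of order `p`. -/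
def AW (T : ℕ) (p : ℝ) (P Q : Measure (PathSp T)) : ℝ :=
  sInf { r | ∃ π : Measure (PathSp T × PathSp T), IsCoupling π P Q ∧ Bicausal T π ∧
    r = (∑ t : Fin T, ∫ z, |z.1 t - z.2 t| ^ p ∂π) ^ (1 / p) }

/-- The closed ball of radius `r` around `P` in the adapted Wasserstein distance,
within the set of probability measures with finite `p`-th moment. -/
def AWball (T : ℕ) (p : ℝ) (P : Measure (PathSp T)) (r : ℝ) : Set (Measure (PathSp T)) :=
  { Q | IsProbabilityMeasure Q ∧ FiniteMoment p Q ∧ AW T p P Q ≤ r }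

/-- Partial derivative `∂_{x_t} f`. -/
def pd {T : ℕ} (f : PathSp T → ℝ) (x : PathSp T) (t : Fin T) : ℝ :=
  fderiv ℝ f x (Pi.single t 1)


/-- A stopping time of the canonical filtration, with values in `{1,…,T}`
(0-indexed as `Fin T`): `{τ ≤ t} ∈ ℱ_t^X`. -/
def IsStopping (T : ℕ) (τ : PathSp T → Fin T) : Prop :=
  ∀ t : Fin T, MeasurableSet[FX T ((t : ℕ) + 1)] {x | τ x ≤ t}

/-- Value `s(Q) = inf_{τ ∈ ST} E_Q[f(X,τ)]` of the optimal stopping problem. -/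
def stopval (T : ℕ) (f : PathSp T → Fin T → ℝ) (Q : Measure (PathSp T)) : ℝ :=
  sInf { v | ∃ τ : PathSp T → Fin T, IsStopping T τ ∧ v = ∫ x, f x (τ x) ∂Q }

lemma FX_le_borel (T t : ℕ) : FX T t ≤ (inferInstance : MeasurableSpace (PathSp T)) := by
  refine iSup_le fun i => iSup_le fun _ => ?_
  exact measurable_iff_comap_le.mp (measurable_pi_apply i)

lemma FX_mono (T : ℕ) {s t : ℕ} (h : s ≤ t) : FX T s ≤ FX T t := by
  refine iSup_le fun i => iSup_le fun hi => ?_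
  exact le_iSup₂ (f := fun (i : Fin T) (_ : (i : ℕ) < t) =>
    MeasurableSpace.comap (fun x : PathSp T => x i) inferInstance) i (lt_of_lt_of_le hi h)

lemma prodY_le_amb (T t : ℕ) :
    prodY T t ≤ (inferInstance : MeasurableSpace (PathSp T × PathSp T)) := by
  refine le_trans (MeasurableSpace.comap_mono (FX_le_borel T t)) ?_
  exact measurable_iff_comap_le.mp measurable_snd

lemma prodY_mono (T : ℕ) {s t : ℕ} (h : s ≤ t) : prodY T s ≤ prodY T t :=
  MeasurableSpace.comap_mono (FX_mono T h)

lemma factor_snd {α β : Type*} {m : MeasurableSpace β} {g : α × β → ℝ}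
    (hg : Measurable[MeasurableSpace.comap Prod.snd m] g) (x₀ : α) (z : α × β) :
    g z = g (x₀, z.2) := by
  obtain ⟨S, -, hSeq⟩ := hg (measurableSet_singleton (g z))
  have hz : z ∈ Prod.snd ⁻¹' S := by rw [hSeq]; exact rfl
  have h2 : (x₀, z.2) ∈ Prod.snd ⁻¹' S := hz
  rw [hSeq] at h2
  exact (h2 : g (x₀, z.2) = g z).symm

lemma factor_snd_meas {α β : Type*} {m : MeasurableSpace β} {g : α × β → ℝ}
    (hg : Measurable[MeasurableSpace.comap Prod.snd m] g) (x₀ : α) :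
    Measurable[m] (fun y => g (x₀, y)) := by
  have h : Measurable[m, MeasurableSpace.comap (Prod.snd : α × β → β) m]
      (fun y => ((x₀, y) : α × β)) := by
    rw [measurable_iff_comap_le, MeasurableSpace.comap_comp]
    have hid : (Prod.snd ∘ fun y : β => ((x₀, y) : α × β)) = id := rfl
    rw [hid, MeasurableSpace.comap_id]
  exact hg.comp h

section AuxStop

/-- Indicator of the event `{τS < k}` in the first coordinate. -/
def gkfun (T : ℕ) (τS : PathSp T → Fin T) (k : ℕ) : PathSp T × PathSp T → ℝ :=
  fun z => ({x | (τS x : ℕ) < k}).indicator (fun _ => (1:ℝ)) z.1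

/-- Conditional probability of `{τS < k}` given `Y₁,…,Y_k` (a function on the product space). -/
def dfun (T : ℕ) (π : Measure (PathSp T × PathSp T)) (τS : PathSp T → Fin T) (k : ℕ) :
    PathSp T × PathSp T → ℝ :=
  π[gkfun T τS k | prodY T k]

/-- The conditional probability of `{τS < k}` as a function of the second path only. -/
def cfun (T : ℕ) (π : Measure (PathSp T × PathSp T)) (τS : PathSp T → Fin T) (k : ℕ)
    (y : PathSp T) : ℝ :=
  dfun T π τS k ((fun _ => 0 : PathSp T), y)

variable {T : ℕ} {π : Measure (PathSp T × PathSp T)} {τS : PathSp T → Fin T}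

lemma B_meas (hτS : IsStopping T τS) {k : ℕ} (hk : k ≤ T) :
    MeasurableSet[FX T k] {x | (τS x : ℕ) < k} := by
  match k with
  | 0 =>
    have h : {x : PathSp T | (τS x : ℕ) < 0} = ∅ := by ext x; simp
    rw [h]; exact @MeasurableSet.empty _ (FX T 0)
  | (m+1) =>
    have hm : m < T := hk
    have h : {x : PathSp T | (τS x : ℕ) < m+1} = {x | τS x ≤ ⟨m, hm⟩} := by
      ext x; simp [Nat.lt_succ_iff, Fin.le_def]
    rw [h]; exact hτS ⟨m, hm⟩

lemma B_meas_borel (hτS : IsStopping T τS) {k : ℕ} (hk : k ≤ T) :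
    MeasurableSet {x : PathSp T | (τS x : ℕ) < k} :=
  FX_le_borel T k _ (B_meas hτS hk)

lemma gk_meas (hτS : IsStopping T τS) {k : ℕ} (hk : k ≤ T) : Measurable (gkfun T τS k) :=
  (measurable_const.indicator (B_meas_borel hτS hk)).comp measurable_fst

lemma gk_int [IsFiniteMeasure π] (hτS : IsStopping T τS) {k : ℕ} (hk : k ≤ T) :
    Integrable (gkfun T τS k) π := by
  refine Integrable.mono' (integrable_const (1:ℝ)) (gk_meas hτS hk).aestronglyMeasurable ?_
  refine Eventually.of_forall fun z => ?_
  by_cases h : (τS z.1 : ℕ) < k <;> simp [gkfun, Set.indicator, h]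

lemma d_meas (k : ℕ) :
    Measurable[MeasurableSpace.comap Prod.snd (FX T k)] (dfun T π τS k) :=
  (stronglyMeasurable_condExp (m := prodY T k)).measurable

lemma d_eq_c (k : ℕ) (z : PathSp T × PathSp T) :
    dfun T π τS k z = cfun T π τS k z.2 :=
  factor_snd (d_meas k) _ z

lemma c_meas (k : ℕ) : Measurable[FX T k] (cfun T π τS k) :=
  factor_snd_meas (d_meas k) _

lemma c_meas_borel (k : ℕ) : Measurable (cfun T π τS k) :=
  (c_meas k).mono (FX_le_borel T k) le_rfl

lemma tower_lemma [IsProbabilityMeasure π] (hbc : Bicausal T π) (hτS : IsStopping T τS)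
    {k l : ℕ} (hkl : k ≤ l) (hl : l ≤ T) :
    π[gkfun T τS k | prodY T l] =ᵐ[π] dfun T π τS k := by
  have h1 := hbc.2 k (hkl.trans hl) _ (B_meas hτS (hkl.trans hl))
  calc π[gkfun T τS k | prodY T l]
      =ᵐ[π] π[π[gkfun T τS k | prodY T T] | prodY T l] :=
        (condExp_condExp_of_le (prodY_mono T hl) (prodY_le_amb T T)).symm
    _ =ᵐ[π] π[dfun T π τS k | prodY T l] := condExp_congr_ae h1
    _ =ᵐ[π] dfun T π τS k := by
        have heq : π[dfun T π τS k | prodY T l] = dfun T π τS k :=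
          condExp_of_stronglyMeasurable (prodY_le_amb T l)
            ((stronglyMeasurable_condExp (m := prodY T k)).mono (prodY_mono T hkl))
            integrable_condExp
        rw [heq]

lemma c_mono [IsProbabilityMeasure π] (hbc : Bicausal T π) (hτS : IsStopping T τS)
    {k l : ℕ} (hkl : k ≤ l) (hl : l ≤ T) :
    ∀ᵐ z ∂π, cfun T π τS k z.2 ≤ cfun T π τS l z.2 := by
  have hptw : gkfun T τS k ≤ᵐ[π] gkfun T τS l := by
    refine Eventually.of_forall fun z => ?_
    by_cases h : (τS z.1 : ℕ) < k
    · have h2 : (τS z.1 : ℕ) < l := lt_of_lt_of_le h hkl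
      simp [gkfun, Set.indicator, h, h2]
    · by_cases h2 : (τS z.1 : ℕ) < l <;> simp [gkfun, Set.indicator, h, h2]
  have h1 : π[gkfun T τS k | prodY T l] ≤ᵐ[π] π[gkfun T τS l | prodY T l] :=
    condExp_mono (gk_int hτS (hkl.trans hl)) (gk_int hτS hl) hptw
  filter_upwards [h1, tower_lemma hbc hτS hkl hl] with z hz1 hz2
  rw [← d_eq_c k z, ← d_eq_c l z, ← hz2]
  exact hz1

lemma c_zero (k : ℕ) (hk : k = 0) (y : PathSp T) : cfun T π τS k y = 0 := by
  subst hk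
  have h : gkfun T τS 0 = (0 : PathSp T × PathSp T → ℝ) := by
    funext z; simp [gkfun]
  rw [cfun, dfun, h, condExp_zero]
  rfl

lemma c_top [IsProbabilityMeasure π] (y : PathSp T) : cfun T π τS T y = 1 := by
  have h : gkfun T τS T = (fun _ => (1:ℝ)) := by
    funext z
    have : (τS z.1 : ℕ) < T := (τS z.1).isLt
    simp [gkfun, Set.indicator, this]
  rw [cfun, dfun, h, condExp_const (prodY_le_amb T T)]

/-- The quantile stopping time associated to level `u` and cumulative functions `c`. -/
def tauOf (n : ℕ) (c : ℕ → PathSp (n+1) → ℝ) (u : ℝ) (y : PathSp (n+1)) : Fin (n+1) :=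
  if h : (Finset.univ.filter fun t : Fin (n+1) => u ≤ c ((t:ℕ)+1) y).Nonempty
  then (Finset.univ.filter fun t : Fin (n+1) => u ≤ c ((t:ℕ)+1) y).min' h
  else Fin.last n

lemma tauOf_stopping (n : ℕ) (c : ℕ → PathSp (n+1) → ℝ)
    (hc : ∀ k, Measurable[FX (n+1) k] (c k)) (u : ℝ) :
    IsStopping (n+1) (tauOf n c u) := by
  intro t
  by_cases ht : t = Fin.last n
  · subst ht
    have h : {y | tauOf n c u y ≤ Fin.last n} = Set.univ :=
      eq_univ_of_forall fun y => Fin.le_last _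
    rw [h]; exact MeasurableSet.univ
  · have hset : {y | tauOf n c u y ≤ t}
        = ⋃ s : Fin (n+1), ⋃ _ : s ≤ t, {y | u ≤ c ((s:ℕ)+1) y} := by
      ext y
      simp only [Set.mem_iUnion, Set.mem_setOf_eq]
      constructor
      · intro hy
        by_cases h : (Finset.univ.filter fun t' : Fin (n+1) => u ≤ c ((t':ℕ)+1) y).Nonempty
        · refine ⟨(Finset.univ.filter fun t' : Fin (n+1) => u ≤ c ((t':ℕ)+1) y).min' h, ?_, ?_⟩
          · rw [tauOf, dif_pos h] at hy; exact hy
          · have hm := Finset.min'_mem _ h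
            simp only [Finset.mem_filter] at hm
            exact hm.2
        · rw [tauOf, dif_neg h] at hy
          exact absurd (le_antisymm (Fin.le_last t) hy) ht
      · rintro ⟨s, hst, hs⟩
        have hmem : s ∈ Finset.univ.filter fun t' : Fin (n+1) => u ≤ c ((t':ℕ)+1) y := by
          simp only [Finset.mem_filter, Finset.mem_univ, true_and]; exact hs
        have hne : (Finset.univ.filter fun t' : Fin (n+1) => u ≤ c ((t':ℕ)+1) y).Nonempty :=
          ⟨s, hmem⟩
        show tauOf n c u y ≤ t
        rw [tauOf, dif_pos hne]
        exact le_trans (Finset.min'_le _ s hmem) hst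
    rw [hset]
    refine MeasurableSet.iUnion fun s => MeasurableSet.iUnion fun hst => ?_
    have h1 : MeasurableSet[FX (n+1) ((s:ℕ)+1)] {y | u ≤ c ((s:ℕ)+1) y} :=
      hc ((s:ℕ)+1) measurableSet_Ici
    exact FX_mono (n+1) (Nat.succ_le_succ (Fin.le_def.mp hst)) _ h1

lemma tauOf_eq_iff (n : ℕ) (c : ℕ → PathSp (n+1) → ℝ) {y : PathSp (n+1)}
    (hmono : ∀ k l : ℕ, k ≤ l → l ≤ n+1 → c k y ≤ c l y)
    (h0 : c 0 y = 0) (h1 : c (n+1) y = 1) {u : ℝ} (hu : u ∈ Set.Ioc (0:ℝ) 1)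
    (t : Fin (n+1)) :
    tauOf n c u y = t ↔ u ∈ Set.Ioc (c (t:ℕ) y) (c ((t:ℕ)+1) y) := by
  have hlastmem : Fin.last n ∈
      Finset.univ.filter (fun t' : Fin (n+1) => u ≤ c ((t':ℕ)+1) y) := by
    simp only [Finset.mem_filter, Finset.mem_univ, true_and, Fin.val_last]
    rw [h1]; exact hu.2
  have hne : (Finset.univ.filter fun t' : Fin (n+1) => u ≤ c ((t':ℕ)+1) y).Nonempty :=
    ⟨_, hlastmem⟩
  have htau : tauOf n c u y
      = (Finset.univ.filter fun t' : Fin (n+1) => u ≤ c ((t':ℕ)+1) y).min' hne :=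
    dif_pos hne
  constructor
  · intro h
    have hmt : (Finset.univ.filter fun t' : Fin (n+1) => u ≤ c ((t':ℕ)+1) y).min' hne = t :=
      htau.symm.trans h
    have hmm := Finset.min'_mem _ hne
    simp only [Finset.mem_filter, Finset.mem_univ, true_and] at hmm
    rw [hmt] at hmm
    refine ⟨?_, hmm⟩
    rcases Nat.eq_zero_or_pos (t:ℕ) with h0' | hpos
    · rw [h0', h0]; exact hu.1
    · obtain ⟨m, hm⟩ : ∃ m, (t:ℕ) = m+1 := ⟨(t:ℕ)-1, by omega⟩
      by_contra hc'
      push_neg at hc'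
      have hmlt : m < n+1 := by have := t.isLt; omega
      have hs : (⟨m, hmlt⟩ : Fin (n+1)) ∈
          Finset.univ.filter fun t' : Fin (n+1) => u ≤ c ((t':ℕ)+1) y := by
        simp only [Finset.mem_filter, Finset.mem_univ, true_and]
        show u ≤ c (m+1) y
        rw [← hm]; exact hc'
      have hle := Finset.min'_le _ _ hs
      rw [hmt] at hle
      have := Fin.le_def.mp hle
      simp only at this
      omega
  · rintro ⟨hlow, hup⟩
    have htmem : t ∈ Finset.univ.filter fun t' : Fin (n+1) => u ≤ c ((t':ℕ)+1) y := by
      simp only [Finset.mem_filter, Finset.mem_univ, true_and]; exact hup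
    rw [htau]
    refine le_antisymm (Finset.min'_le _ _ htmem) (Finset.le_min' _ _ _ ?_)
    intro s hsmem
    simp only [Finset.mem_filter, Finset.mem_univ, true_and] at hsmem
    by_contra hcon
    push_neg at hcon
    have h2 : (s:ℕ)+1 ≤ (t:ℕ) := Fin.lt_def.mp hcon
    have h3 := hmono ((s:ℕ)+1) (t:ℕ) h2 t.isLt.le
    linarith

end AuxStop


/-- transfer of stopping times along a bicausal coupling: given a
bicausal coupling π between P and Q and a stopping time τ*, there is a stopping
time τ with E_Q[f(Y,τ(Y))] ≤ E_π[f(Y,τ*(X))]; consequently s(Q) ≤ E_π[f(Y,τ*(X))]. -/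
theorem stopping_time_transfer
    (T : ℕ) (hT : 0 < T) (p : ℝ) (hp : 1 < p)
    (P Q : Measure (PathSp T)) [IsProbabilityMeasure P] [IsProbabilityMeasure Q]
    (hPm : FiniteMoment p P) (hQm : FiniteMoment p Q)
    (π : Measure (PathSp T × PathSp T)) [IsProbabilityMeasure π]
    (hπ : IsCoupling π P Q) (hbc : Bicausal T π)
    (τS : PathSp T → Fin T) (hτS : IsStopping T τS)
    (f : PathSp T → Fin T → ℝ)
    (hfadapted : ∀ t : Fin T, Measurable[FX T ((t : ℕ) + 1)] fun x => f x t)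
    (hint1 : Integrable (fun z => f z.2 (τS z.1)) π)
    (hint2 : ∀ τ : PathSp T → Fin T, IsStopping T τ →
      Integrable (fun y => f y (τ y)) Q) :
    (∃ τ : PathSp T → Fin T, IsStopping T τ ∧
        (∫ y, f y (τ y) ∂Q) ≤ ∫ z, f z.2 (τS z.1) ∂π) ∧
      stopval T f Q ≤ ∫ z, f z.2 (τS z.1) ∂π := by
  obtain ⟨n, rfl⟩ : ∃ n, T = n + 1 := ⟨T - 1, (Nat.succ_pred_eq_of_pos hT).symm⟩
  set c : ℕ → PathSp (n+1) → ℝ := cfun (n+1) π τS with hc_def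
  have hfB : ∀ t : Fin (n+1), Measurable (fun x => f x t) :=
    fun t => (hfadapted t).mono (FX_le_borel _ _) le_rfl
  have hfint_t : ∀ t : Fin (n+1), Integrable (fun y => f y t) Q := by
    intro t
    refine hint2 (fun _ => t) ?_
    intro s
    by_cases h : t ≤ s
    · have he : {x : PathSp (n+1) | (fun _ => t) x ≤ s} = Set.univ :=
        eq_univ_of_forall fun x => h
      rw [he]; exact MeasurableSet.univ
    · have he : {x : PathSp (n+1) | (fun _ => t) x ≤ s} = ∅ := by ext x; simp [h]
      rw [he]; exact @MeasurableSet.empty _ (FX (n+1) ((s:ℕ)+1))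
  have hfint_tπ : ∀ t : Fin (n+1),
      Integrable (fun z : PathSp (n+1) × PathSp (n+1) => f z.2 t) π := by
    intro t
    have h1 : Integrable (fun y => f y t) (π.map Prod.snd) := by
      rw [hπ.2]; exact hfint_t t
    rw [integrable_map_measure (hfB t).aestronglyMeasurable measurable_snd.aemeasurable] at h1
    exact h1
  have hGmono : ∀ᵐ z ∂π, ∀ k : ℕ, ∀ l : ℕ, k ≤ l → l ≤ n+1 → c k z.2 ≤ c l z.2 := by
    rw [ae_all_iff]; intro k; rw [ae_all_iff]; intro l
    by_cases h : k ≤ l ∧ l ≤ n+1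
    · filter_upwards [c_mono hbc hτS h.1 h.2] with z hz _ _; exact hz
    · filter_upwards with z h1 h2; exact absurd ⟨h1, h2⟩ h
  set GS : Set (PathSp (n+1)) := {y | ∀ k : ℕ, ∀ l : ℕ, k ≤ l → l ≤ n+1 → c k y ≤ c l y}
    with hGS_def
  have hGSmeas : MeasurableSet GS := by
    have h : GS = ⋂ k : ℕ, ⋂ l : ℕ, {y | k ≤ l → l ≤ n+1 → c k y ≤ c l y} := by
      ext y; simp only [hGS_def, Set.mem_setOf_eq, Set.mem_iInter]
    rw [h]
    refine MeasurableSet.iInter fun k => MeasurableSet.iInter fun l => ?_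
    by_cases h2 : k ≤ l ∧ l ≤ n+1
    · have he : {y : PathSp (n+1) | k ≤ l → l ≤ n+1 → c k y ≤ c l y} = {y | c k y ≤ c l y} := by
        ext y; simp [h2.1, h2.2]
      rw [he]; exact measurableSet_le (c_meas_borel k) (c_meas_borel l)
    · have he : {y : PathSp (n+1) | k ≤ l → l ≤ n+1 → c k y ≤ c l y} = Set.univ := by
        ext y; simp only [Set.mem_setOf_eq, Set.mem_univ, iff_true]
        intro h1' h2'; exact absurd ⟨h1', h2'⟩ h2
      rw [he]; exact MeasurableSet.univ
  have hGSae : ∀ᵐ y ∂Q, y ∈ GS := by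
    rw [← hπ.2]
    exact (ae_map_iff measurable_snd.aemeasurable hGSmeas).mpr hGmono
  have hc0 : ∀ y, c 0 y = 0 := fun y => c_zero 0 rfl y
  have hc1 : ∀ y, c (n+1) y = 1 := fun y => c_top y
  have hcbound : ∀ k : ℕ, k ≤ n+1 → ∀ᵐ z ∂π, |c k z.2| ≤ 1 := by
    intro k hk
    filter_upwards [c_mono hbc hτS (Nat.zero_le k) hk, c_mono hbc hτS hk le_rfl] with z h1 h2
    rw [← hc_def] at h1 h2
    rw [hc0 z.2] at h1
    rw [hc1 z.2] at h2
    rw [abs_le]; exact ⟨by linarith, h2⟩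
  have hfgk_int : ∀ (t : Fin (n+1)) (k : ℕ), k ≤ n+1 →
      Integrable (fun z => f z.2 t * gkfun (n+1) τS k z) π := by
    intro t k hk
    refine Integrable.mono' (hfint_tπ t).norm
      (((hfB t).comp measurable_snd).mul (gk_meas hτS hk)).aestronglyMeasurable ?_
    refine Eventually.of_forall fun z => ?_
    rw [norm_mul]
    have hb : ‖gkfun (n+1) τS k z‖ ≤ 1 := by
      by_cases h : (τS z.1 : ℕ) < k <;> simp [gkfun, Set.indicator, h]
    calc ‖f z.2 t‖ * ‖gkfun (n+1) τS k z‖ ≤ ‖f z.2 t‖ * 1 :=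
          mul_le_mul_of_nonneg_left hb (norm_nonneg _)
      _ = ‖f z.2 t‖ := mul_one _
  have hfc_int : ∀ (t : Fin (n+1)) (k : ℕ), k ≤ n+1 →
      Integrable (fun z => f z.2 t * c k z.2) π := by
    intro t k hk
    refine Integrable.mono' (hfint_tπ t).norm
      (((hfB t).comp measurable_snd).mul
        ((c_meas_borel k).comp measurable_snd)).aestronglyMeasurable ?_
    filter_upwards [hcbound k hk] with z hz
    rw [norm_mul]
    calc ‖f z.2 t‖ * ‖c k z.2‖ ≤ ‖f z.2 t‖ * 1 :=
          mul_le_mul_of_nonneg_left (by rwa [Real.norm_eq_abs]) (norm_nonneg _)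
      _ = ‖f z.2 t‖ := mul_one _
  have hprod : ∀ (t : Fin (n+1)) (k : ℕ), k ≤ (t:ℕ)+1 →
      ∫ z, f z.2 t * gkfun (n+1) τS k z ∂π = ∫ z, f z.2 t * c k z.2 ∂π := by
    intro t k hk
    have htle : (t:ℕ)+1 ≤ n+1 := t.isLt
    have hmle := prodY_le_amb (n+1) ((t:ℕ)+1)
    have hfm : StronglyMeasurable[prodY (n+1) ((t:ℕ)+1)]
        (fun z : PathSp (n+1) × PathSp (n+1) => f z.2 t) := by
      have hsnd : Measurable[prodY (n+1) ((t:ℕ)+1), FX (n+1) ((t:ℕ)+1)]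
          (Prod.snd : PathSp (n+1) × PathSp (n+1) → PathSp (n+1)) :=
        fun s hs => MeasurableSpace.measurableSet_comap.mpr ⟨s, hs, rfl⟩
      exact ((hfadapted t).comp hsnd).stronglyMeasurable
    have hpull := condExp_mul_of_stronglyMeasurable_left (μ := π) (m := prodY (n+1) ((t:ℕ)+1)) hfm
      (hfgk_int t k (hk.trans htle)) (gk_int hτS (hk.trans htle))
    calc ∫ z, f z.2 t * gkfun (n+1) τS k z ∂π
        = ∫ z, ((fun z : PathSp (n+1) × PathSp (n+1) => f z.2 t) * gkfun (n+1) τS k) z ∂π := rfl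
      _ = ∫ z, (π[(fun z : PathSp (n+1) × PathSp (n+1) => f z.2 t) * gkfun (n+1) τS k |
            prodY (n+1) ((t:ℕ)+1)]) z ∂π := (integral_condExp hmle).symm
      _ = ∫ z, ((fun z : PathSp (n+1) × PathSp (n+1) => f z.2 t) *
            π[gkfun (n+1) τS k | prodY (n+1) ((t:ℕ)+1)]) z ∂π := integral_congr_ae hpull
      _ = ∫ z, f z.2 t * c k z.2 ∂π := by
          refine integral_congr_ae ?_
          filter_upwards [tower_lemma hbc hτS hk htle] with z hz
          simp only [Pi.mul_apply]
          rw [hz, d_eq_c, ← hc_def]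
  have hstepA : ∫ z, f z.2 (τS z.1) ∂π
      = ∑ t : Fin (n+1), ∫ y, f y t * (c ((t:ℕ)+1) y - c (t:ℕ) y) ∂Q := by
    have hptw : ∀ z : PathSp (n+1) × PathSp (n+1),
        f z.2 (τS z.1) = ∑ t : Fin (n+1),
          f z.2 t * (gkfun (n+1) τS ((t:ℕ)+1) z - gkfun (n+1) τS (t:ℕ) z) := by
      intro z
      rw [Finset.sum_eq_single (τS z.1)]
      · have h1 : (τS z.1 : ℕ) < (τS z.1 : ℕ)+1 := Nat.lt_succ_self _
        have h2 : ¬((τS z.1 : ℕ) < (τS z.1 : ℕ)) := lt_irrefl _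
        simp only [gkfun]
        rw [Set.indicator_of_mem
              (show z.1 ∈ {x : PathSp (n+1) | (τS x : ℕ) < (τS z.1 : ℕ)+1} from h1),
            Set.indicator_of_notMem
              (show z.1 ∉ {x : PathSp (n+1) | (τS x : ℕ) < (τS z.1 : ℕ)} from h2)]
        ring
      · intro t _ hne
        have e : gkfun (n+1) τS ((t:ℕ)+1) z = gkfun (n+1) τS (t:ℕ) z := by
          by_cases hlt : (τS z.1 : ℕ) < (t:ℕ)
          · have h1 : (τS z.1 : ℕ) < (t:ℕ)+1 := by omega
            simp only [gkfun]
            rw [Set.indicator_of_mem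
                  (show z.1 ∈ {x : PathSp (n+1) | (τS x : ℕ) < (t:ℕ)+1} from h1),
                Set.indicator_of_mem
                  (show z.1 ∈ {x : PathSp (n+1) | (τS x : ℕ) < (t:ℕ)} from hlt)]
          · have hv : (τS z.1 : ℕ) ≠ (t : ℕ) := fun h => hne (Fin.ext h).symm
            have h1 : ¬((τS z.1:ℕ) < (t:ℕ)+1) := by omega
            simp only [gkfun]
            rw [Set.indicator_of_notMem
                  (show z.1 ∉ {x : PathSp (n+1) | (τS x : ℕ) < (t:ℕ)+1} from h1),
                Set.indicator_of_notMem
                  (show z.1 ∉ {x : PathSp (n+1) | (τS x : ℕ) < (t:ℕ)} from hlt)]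
        rw [e, sub_self, mul_zero]
      · intro h; exact absurd (Finset.mem_univ _) h
    have hint_each : ∀ t : Fin (n+1),
        Integrable (fun z => f z.2 t *
          (gkfun (n+1) τS ((t:ℕ)+1) z - gkfun (n+1) τS (t:ℕ) z)) π := by
      intro t
      have h := (hfgk_int t ((t:ℕ)+1) t.isLt).sub (hfgk_int t (t:ℕ) (le_of_lt t.isLt))
      refine h.congr (Eventually.of_forall fun z => ?_)
      simp only [Pi.sub_apply]
      ring
    calc ∫ z, f z.2 (τS z.1) ∂π
        = ∫ z, ∑ t : Fin (n+1),
            f z.2 t * (gkfun (n+1) τS ((t:ℕ)+1) z - gkfun (n+1) τS (t:ℕ) z) ∂π :=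
          integral_congr_ae (Eventually.of_forall hptw)
      _ = ∑ t : Fin (n+1), ∫ z,
            f z.2 t * (gkfun (n+1) τS ((t:ℕ)+1) z - gkfun (n+1) τS (t:ℕ) z) ∂π :=
          integral_finset_sum _ (fun t _ => hint_each t)
      _ = ∑ t : Fin (n+1), ∫ z, f z.2 t * (c ((t:ℕ)+1) z.2 - c (t:ℕ) z.2) ∂π := by
          refine Finset.sum_congr rfl fun t _ => ?_
          have e1 : ∫ z, f z.2 t * (gkfun (n+1) τS ((t:ℕ)+1) z - gkfun (n+1) τS (t:ℕ) z) ∂π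
              = ∫ z, f z.2 t * gkfun (n+1) τS ((t:ℕ)+1) z ∂π
                - ∫ z, f z.2 t * gkfun (n+1) τS (t:ℕ) z ∂π := by
            rw [← integral_sub (hfgk_int t _ t.isLt) (hfgk_int t _ (le_of_lt t.isLt))]
            exact integral_congr_ae (Eventually.of_forall fun z => by ring)
          have e2 : ∫ z, f z.2 t * (c ((t:ℕ)+1) z.2 - c (t:ℕ) z.2) ∂π
              = ∫ z, f z.2 t * c ((t:ℕ)+1) z.2 ∂π - ∫ z, f z.2 t * c (t:ℕ) z.2 ∂π := by
            rw [← integral_sub (hfc_int t _ t.isLt) (hfc_int t _ (le_of_lt t.isLt))]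
            exact integral_congr_ae (Eventually.of_forall fun z => by ring)
          rw [e1, e2, hprod t ((t:ℕ)+1) le_rfl, hprod t (t:ℕ) (Nat.le_succ _)]
      _ = ∑ t : Fin (n+1), ∫ y, f y t * (c ((t:ℕ)+1) y - c (t:ℕ) y) ∂Q := by
          refine Finset.sum_congr rfl fun t _ => ?_
          rw [← hπ.2]
          exact (integral_map measurable_snd.aemeasurable
            ((hfB t).mul ((c_meas_borel ((t:ℕ)+1)).sub (c_meas_borel (t:ℕ)))).aestronglyMeasurable).symm
  set μ0 : Measure ℝ := volume.restrict (Set.Ioc (0:ℝ) 1) with hμ0_def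
  haveI hμ0prob : IsProbabilityMeasure μ0 := by
    constructor
    rw [hμ0_def, Measure.restrict_apply MeasurableSet.univ, Set.univ_inter, Real.volume_Ioc]
    norm_num
  set S : Fin (n+1) → ℝ × PathSp (n+1) → ℝ := fun t p =>
    f p.2 t * (Set.Ioc (c (t:ℕ) p.2) (c ((t:ℕ)+1) p.2)).indicator (fun _ => (1:ℝ)) p.1
    with hS_def
  have hSmeas : ∀ t : Fin (n+1), Measurable (S t) := by
    intro t
    simp only [hS_def]
    refine Measurable.mul ((hfB t).comp measurable_snd) ?_
    have h1 : (fun p : ℝ × PathSp (n+1) =>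
        (Set.Ioc (c (t:ℕ) p.2) (c ((t:ℕ)+1) p.2)).indicator (fun _ => (1:ℝ)) p.1)
        = Set.indicator {p : ℝ × PathSp (n+1) | c (t:ℕ) p.2 < p.1 ∧ p.1 ≤ c ((t:ℕ)+1) p.2}
            (fun _ => (1:ℝ)) := by
      funext p
      simp only [Set.indicator_apply, Set.mem_Ioc, Set.mem_setOf_eq]
    rw [h1]
    refine measurable_const.indicator ?_
    exact (measurableSet_lt ((c_meas_borel (t:ℕ)).comp measurable_snd) measurable_fst).inter
      (measurableSet_le measurable_fst ((c_meas_borel ((t:ℕ)+1)).comp measurable_snd))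
  have hfint_prod : ∀ t : Fin (n+1),
      Integrable (fun p : ℝ × PathSp (n+1) => f p.2 t) (μ0.prod Q) := by
    intro t
    have hmap : (μ0.prod Q).map Prod.snd = Q := by
      rw [Measure.map_snd_prod, measure_univ, one_smul]
    have h1 : Integrable (fun y => f y t) ((μ0.prod Q).map Prod.snd) := by
      rw [hmap]; exact hfint_t t
    rw [integrable_map_measure (hfB t).aestronglyMeasurable measurable_snd.aemeasurable] at h1
    exact h1
  have hindb : ∀ (t : Fin (n+1)) (p : ℝ × PathSp (n+1)),
      ‖(Set.Ioc (c (t:ℕ) p.2) (c ((t:ℕ)+1) p.2)).indicator (fun _ => (1:ℝ)) p.1‖ ≤ 1 := by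
    intro t p
    by_cases h : p.1 ∈ Set.Ioc (c (t:ℕ) p.2) (c ((t:ℕ)+1) p.2) <;> simp [Set.indicator_apply, h]
  have hSint : ∀ t : Fin (n+1), Integrable (S t) (μ0.prod Q) := by
    intro t
    refine Integrable.mono' (hfint_prod t).norm (hSmeas t).aestronglyMeasurable ?_
    refine Eventually.of_forall fun p => ?_
    simp only [hS_def]
    rw [norm_mul]
    calc ‖f p.2 t‖ * ‖(Set.Ioc (c (t:ℕ) p.2) (c ((t:ℕ)+1) p.2)).indicator (fun _ => (1:ℝ)) p.1‖
        ≤ ‖f p.2 t‖ * 1 := mul_le_mul_of_nonneg_left (hindb t p) (norm_nonneg _)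
      _ = ‖f p.2 t‖ := mul_one _
  have h01 : ∀ y ∈ GS, ∀ k : ℕ, k ≤ n+1 → 0 ≤ c k y ∧ c k y ≤ 1 := by
    intro y hy k hk
    constructor
    · have h := hy 0 k (Nat.zero_le k) hk; rwa [hc0 y] at h
    · have h := hy k (n+1) hk le_rfl; rwa [hc1 y] at h
  have hinner : ∀ y ∈ GS, ∀ t : Fin (n+1),
      ∫ u, S t (u, y) ∂μ0 = f y t * (c ((t:ℕ)+1) y - c (t:ℕ) y) := by
    intro y hy t
    have hab : c (t:ℕ) y ≤ c ((t:ℕ)+1) y := hy (t:ℕ) ((t:ℕ)+1) (Nat.le_succ _) t.isLt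
    have hsub : Set.Ioc (c (t:ℕ) y) (c ((t:ℕ)+1) y) ⊆ Set.Ioc (0:ℝ) 1 :=
      Set.Ioc_subset_Ioc (h01 y hy (t:ℕ) (le_of_lt t.isLt)).1 (h01 y hy ((t:ℕ)+1) t.isLt).2
    simp only [hS_def]
    rw [integral_const_mul, integral_indicator_const _ measurableSet_Ioc, hμ0_def,
      measureReal_restrict_apply measurableSet_Ioc, Set.inter_eq_self_of_subset_left hsub,
      Real.volume_real_Ioc_of_le hab, smul_eq_mul, mul_one]
  have hψ_eq : ∀ u ∈ Set.Ioc (0:ℝ) 1, ∀ᵐ y ∂Q,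
      f y (tauOf n c u y) = ∑ t : Fin (n+1), S t (u, y) := by
    intro u hu
    filter_upwards [hGSae] with y hy
    rw [Finset.sum_eq_single (tauOf n c u y)]
    · have hmem : u ∈ Set.Ioc (c ((tauOf n c u y : ℕ)) y) (c ((tauOf n c u y : ℕ)+1) y) :=
        (tauOf_eq_iff n c hy (hc0 y) (hc1 y) hu _).mp rfl
      simp only [hS_def]
      rw [Set.indicator_of_mem hmem, mul_one]
    · intro t _ hne
      have hnm : u ∉ Set.Ioc (c (t:ℕ) y) (c ((t:ℕ)+1) y) := by
        intro hmem
        exact hne ((tauOf_eq_iff n c hy (hc0 y) (hc1 y) hu t).mpr hmem).symm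
      simp only [hS_def]
      rw [Set.indicator_of_notMem hnm, mul_zero]
    · intro h; exact absurd (Finset.mem_univ _) h
  have hSy_int : ∀ (u : ℝ) (t : Fin (n+1)), Integrable (fun y => S t (u, y)) Q := by
    intro u t
    refine Integrable.mono' (hfint_t t).norm
      ((hSmeas t).comp measurable_prodMk_left).aestronglyMeasurable ?_
    refine Eventually.of_forall fun y => ?_
    simp only [hS_def]
    rw [norm_mul]
    calc ‖f y t‖ * ‖(Set.Ioc (c (t:ℕ) y) (c ((t:ℕ)+1) y)).indicator (fun _ => (1:ℝ)) u‖
        ≤ ‖f y t‖ * 1 := mul_le_mul_of_nonneg_left (hindb t (u, y)) (norm_nonneg _)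
      _ = ‖f y t‖ := mul_one _
  have hstepB : ∀ u ∈ Set.Ioc (0:ℝ) 1,
      ∫ y, f y (tauOf n c u y) ∂Q = ∑ t : Fin (n+1), ∫ y, S t (u, y) ∂Q := by
    intro u hu
    rw [integral_congr_ae (hψ_eq u hu), integral_finset_sum _ (fun t _ => hSy_int u t)]
  have hψint : ∀ t : Fin (n+1), Integrable (fun u => ∫ y, S t (u, y) ∂Q) μ0 :=
    fun t => (hSint t).integral_prod_left
  have hstepC : ∫ u, (∑ t : Fin (n+1), ∫ y, S t (u, y) ∂Q) ∂μ0
      = ∫ z, f z.2 (τS z.1) ∂π := by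
    rw [integral_finset_sum _ (fun t _ => hψint t), hstepA]
    refine Finset.sum_congr rfl fun t _ => ?_
    rw [← integral_prod _ (hSint t), integral_prod_symm _ (hSint t)]
    refine integral_congr_ae ?_
    filter_upwards [hGSae] with y hy
    exact hinner y hy t
  have hexists : ∃ u ∈ Set.Ioc (0:ℝ) 1,
      (∑ t : Fin (n+1), ∫ y, S t (u, y) ∂Q) ≤ ∫ z, f z.2 (τS z.1) ∂π := by
    by_contra hcon
    push_neg at hcon
    set C : ℝ := ∫ z, f z.2 (τS z.1) ∂π with hC_def
    set ψ : ℝ → ℝ := fun u => ∑ t : Fin (n+1), ∫ y, S t (u, y) ∂Q with hψ_def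
    have hψint' : Integrable ψ μ0 := integrable_finset_sum _ (fun t _ => hψint t)
    have hae : ∀ᵐ u ∂μ0, u ∈ Set.Ioc (0:ℝ) 1 := by
      rw [hμ0_def]; exact ae_restrict_mem measurableSet_Ioc
    have hnn : 0 ≤ᵐ[μ0] fun u => ψ u - C := by
      filter_upwards [hae] with u hu
      have h := hcon u hu
      simp only [Pi.zero_apply]
      linarith
    have hint' : Integrable (fun u => ψ u - C) μ0 := hψint'.sub (integrable_const C)
    have hz : ∫ u, (ψ u - C) ∂μ0 = 0 := by
      rw [integral_sub hψint' (integrable_const C), integral_const, probReal_univ,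
        one_smul]
      have h : ∫ u, ψ u ∂μ0 = C := hstepC
      rw [h, sub_self]
    have hzero := (integral_eq_zero_iff_of_nonneg_ae hnn hint').mp hz
    have hpos : ∀ᵐ u ∂μ0, 0 < ψ u - C := by
      filter_upwards [hae] with u hu; linarith [hcon u hu]
    haveI : (ae μ0).NeBot := ae_neBot.mpr (IsProbabilityMeasure.ne_zero μ0)
    obtain ⟨u, h1, h2⟩ := (hzero.and hpos).exists
    simp only [Pi.zero_apply] at h1
    rw [h1] at h2
    exact lt_irrefl 0 h2
  obtain ⟨u, hu, hule⟩ := hexists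
  have hτstop : IsStopping (n+1) (tauOf n c u) := tauOf_stopping n c (fun k => c_meas k) u
  have hval : ∫ y, f y (tauOf n c u y) ∂Q ≤ ∫ z, f z.2 (τS z.1) ∂π := by
    rw [hstepB u hu]; exact hule
  refine ⟨⟨tauOf n c u, hτstop, hval⟩, ?_⟩
  have hg0int : Integrable (fun y => ∑ t : Fin (n+1), |f y t|) Q :=
    integrable_finset_sum _ (fun t _ => (hfint_t t).abs)
  have hbdd : BddBelow {v | ∃ τ : PathSp (n+1) → Fin (n+1),
      IsStopping (n+1) τ ∧ v = ∫ x, f x (τ x) ∂Q} := by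
    refine ⟨-∫ y, ∑ t : Fin (n+1), |f y t| ∂Q, ?_⟩
    rintro v ⟨τ', hτ', rfl⟩
    rw [← integral_neg]
    refine integral_mono hg0int.neg (hint2 τ' hτ') fun y => ?_
    have h1 : |f y (τ' y)| ≤ ∑ t : Fin (n+1), |f y t| :=
      Finset.single_le_sum (f := fun t : Fin (n+1) => |f y t|)
        (fun t _ => abs_nonneg _) (Finset.mem_univ _)
    have h2 := neg_abs_le (f y (τ' y))
    simp only [Pi.neg_apply]
    linarith
  have hmem : (∫ y, f y (tauOf n c u y) ∂Q) ∈
      {v | ∃ τ : PathSp (n+1) → Fin (n+1), IsStopping (n+1) τ ∧ v = ∫ x, f x (τ x) ∂Q} :=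
    ⟨tauOf n c u, hτstop, rfl⟩
  calc stopval (n+1) f Q ≤ ∫ y, f y (tauOf n c u y) ∂Q := csInf_le hbdd hmem
    _ ≤ _ := hval


end
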